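/- Let D ≥ 1, N ≥ 1, let y, u, u' be D×D complex matrices with y*u − u*y = u and y*u' − u'*y = u', and let λ : Fin N → ℂ. Define ND×ND matrices indexed by Fin N × Fin D: U_N((p,i),(q,j)) = u i j if p = q, λ p * u' i j if q = p+1, and 0 otherwise; Y_N((p,i),(q,j)) = y i j if p = q, λ p * (if i = j then 1 else 0) if q = p+1, and 0 otherwise. Then Y_N*U_N − U_N*Y_N = U_N. -/

import Mathlib

open Matrix

lemma sum_fin_succ' {N : ℕ} (p : Fin N) (B : Fin N → ℂ) :
    ∑ r : Fin N, (if (p:ℕ)+1 = (r:ℕ) then B r else 0)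
      = if h : (p:ℕ)+1 < N then B ⟨(p:ℕ)+1, h⟩ else 0 := by
  split_ifs with h
  · rw [Finset.sum_eq_single (⟨(p:ℕ)+1, h⟩ : Fin N)]
    · simp
    · intro b _ hb
      rw [if_neg]
      intro hc
      exact hb (Fin.ext hc.symm)
    · simp
  · apply Finset.sum_eq_zero
    intro r _
    rw [if_neg]
    intro hc
    exact h (hc ▸ r.isLt)

lemma sum_two' {N : ℕ} (p : Fin N) (f : Fin N → ℂ)
    (h0 : ∀ r, r ≠ p → (p:ℕ)+1 ≠ (r:ℕ) → f r = 0) :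
    ∑ r, f r = f p + (if h : (p:ℕ)+1 < N then f ⟨(p:ℕ)+1, h⟩ else 0) := by
  have key : ∀ r, f r = (if r = p then f r else 0) + (if (p:ℕ)+1 = (r:ℕ) then f r else 0) := by
    intro r
    by_cases h1 : r = p
    · subst h1
      simp [show ¬((r:ℕ)+1 = (r:ℕ)) by omega]
    · by_cases h2 : (p:ℕ)+1 = (r:ℕ) <;> simp [h1, h2, h0 r h1]
  rw [Finset.sum_congr rfl (fun r _ => key r), Finset.sum_add_distrib,
    Finset.sum_ite_eq' Finset.univ p f, sum_fin_succ']
  simp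

theorem matryoshka_N_grading (D N : ℕ) (hD : 1 ≤ D) (hN : 1 ≤ N)
    (y u u' : Matrix (Fin D) (Fin D) ℂ)
    (hu : y * u - u * y = u)
    (hu' : y * u' - u' * y = u')
    (lam : Fin N → ℂ)
    (UN YN : Matrix (Fin N × Fin D) (Fin N × Fin D) ℂ)
    (hU : ∀ (p q : Fin N) (i j : Fin D),
      UN (p, i) (q, j) = if p = q then u i j
        else if (p : ℕ) + 1 = (q : ℕ) then lam p * u' i j else 0)
    (hY : ∀ (p q : Fin N) (i j : Fin D),
      YN (p, i) (q, j) = if p = q then y i j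
        else if (p : ℕ) + 1 = (q : ℕ) then lam p * (if i = j then 1 else 0) else 0) :
    YN * UN - UN * YN = UN := by
  have hu_e : ∀ i j, (∑ k, y i k * u k j) - (∑ k, u i k * y k j) = u i j := by
    intro i j
    have := congrFun (congrFun hu i) j
    simpa [mul_apply, Matrix.sub_apply] using this
  have hu'_e : ∀ i j, (∑ k, y i k * u' k j) - (∑ k, u' i k * y k j) = u' i j := by
    intro i j
    have := congrFun (congrFun hu' i) j
    simpa [mul_apply, Matrix.sub_apply] using this
  ext ⟨p, i⟩ ⟨q, j⟩
  simp only [Matrix.sub_apply, mul_apply, Fintype.sum_prod_type]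
  rw [sum_two' p (fun r => ∑ k, YN (p, i) (r, k) * UN (r, k) (q, j)) (by
    intro r h1 h2
    apply Finset.sum_eq_zero
    intro k _
    rw [hY, if_neg (fun h => h1 h.symm), if_neg h2, zero_mul])]
  rw [sum_two' p (fun r => ∑ k, UN (p, i) (r, k) * YN (r, k) (q, j)) (by
    intro r h1 h2
    apply Finset.sum_eq_zero
    intro k _
    rw [hU, if_neg (fun h => h1 h.symm), if_neg h2, zero_mul])]
  simp only [hU, hY]
  by_cases hpq : p = q
  · subst hpq
    have hne : ((p:ℕ)+1 ≠ (p:ℕ)) := by omega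
    simp only [if_pos rfl]
    simp [Fin.ext_iff, hne, show (p:ℕ) ≠ (p:ℕ)+1 by omega, show (p:ℕ)+1+1 ≠ (p:ℕ) by omega]
    exact hu_e i j
  · by_cases h1 : (p:ℕ)+1 = (q:ℕ)
    · have hlt : (p:ℕ)+1 < N := h1 ▸ q.isLt
      have hq : (⟨(p:ℕ)+1, hlt⟩ : Fin N) = q := Fin.ext h1
      simp only [dif_pos hlt, hq, if_neg hpq, if_pos h1, if_pos rfl,
        if_neg (fun h : p = q => hpq h)]
      simp [hpq, h1, show ¬ q = p from fun h => hpq h.symm, Finset.mul_sum, mul_ite, ite_mul,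
        Finset.sum_ite_eq, Finset.sum_ite_eq',
        show ¬ ((q:ℕ)+1 = (q:ℕ)) by omega]
      have e1 : ∑ x : Fin D, y i x * (lam p * u' x j) = lam p * ∑ k : Fin D, y i k * u' k j := by
        rw [Finset.mul_sum]; exact Finset.sum_congr rfl fun _ _ => by ring
      have e2 : ∑ x : Fin D, lam p * u' i x * y x j = lam p * ∑ k : Fin D, u' i k * y k j := by
        rw [Finset.mul_sum]; exact Finset.sum_congr rfl fun _ _ => by ring
      rw [e1, e2]
      linear_combination lam p * hu'_e i j
    · by_cases h2 : (p:ℕ)+1+1 = (q:ℕ)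
      · have hlt : (p:ℕ)+1 < N := by have := q.isLt; omega
        simp only [dif_pos hlt]
        simp [hpq, h1, h2, mul_ite, ite_mul,
          Finset.sum_ite_eq, Finset.sum_ite_eq',
          show ¬ p = (⟨(p:ℕ)+1, hlt⟩ : Fin N) from fun h => by
            have := congrArg Fin.val h; simp at this,
          show ¬ (⟨(p:ℕ)+1, hlt⟩ : Fin N) = q from fun h => by
            have := congrArg Fin.val h; simp at this; omega]
        ring
      · simp [Fin.ext_iff, hpq, h1, h2,
          show (p:ℕ) ≠ (q:ℕ) from fun h => hpq (Fin.ext h)]
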